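/- Let T > 0 and m ∈ ℝ with m ≠ 0 and |m| ≠ (kπ/T)² for every k ∈ ℕ. Then the constant function v₀(t) = 1/m is the unique solution of v''(t) + m·v(-t) = 1 on [-T,T] with boundary conditions v(T) = v(-T) and v'(-T) = v'(T). -/

import Mathlib

open Set Real

/-- `v` is a solution of `v''(t) + m v(-t) = 1` on `[-T,T]` with periodic
boundary conditions. -/
def IsSolS2 (T m : ℝ) (v : ℝ → ℝ) : Prop :=
  ContDiffOn ℝ 2 v (Set.Icc (-T) T) ∧
  (∀ t ∈ Set.Icc (-T) T,
    iteratedDerivWithin 2 v (Set.Icc (-T) T) t + m * v (-t) = 1) ∧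
  v T = v (-T) ∧
  derivWithin v (Set.Icc (-T) T) (-T) = derivWithin v (Set.Icc (-T) T) T

private lemma hdw_of_eq {f : ℝ → ℝ} {s : Set ℝ} {x a b : ℝ}
    (h : HasDerivWithinAt f a s x) (hba : b = a) : HasDerivWithinAt f b s x := hba ▸ h

private lemma constIcc {a b : ℝ} {f : ℝ → ℝ}
    (hf : ∀ x ∈ Icc a b, HasDerivWithinAt f 0 (Icc a b) x) :
    ∀ x ∈ Icc a b, f x = f a := by
  refine constant_of_has_deriv_right_zero (fun x hx => (hf x hx).continuousWithinAt) ?_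
  intro x hx
  exact (hf x ⟨hx.1, hx.2.le⟩).mono_of_mem_nhdsWithin (Icc_mem_nhdsGE_of_mem hx)

private lemma expODE {b c : ℝ} {u : ℝ → ℝ}
    (hu : ∀ x ∈ Icc 0 b, HasDerivWithinAt u (c * u x) (Icc 0 b) x) :
    ∀ x ∈ Icc 0 b, u x = u 0 * Real.exp (c * x) := by
  have key : ∀ x ∈ Icc 0 b, u x * Real.exp (-(c * x)) = u 0 * Real.exp (-(c * 0)) := by
    apply constIcc
    intro x hx
    have h1 : HasDerivAt (fun y : ℝ => -(c * y)) (-c) x := by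
      have h := ((hasDerivAt_id x).const_mul c).neg
      rw [mul_one] at h
      exact h
    have hexp : HasDerivAt (fun y : ℝ => Real.exp (-(c * y))) (Real.exp (-(c * x)) * -c) x :=
      h1.exp
    exact hdw_of_eq ((hu x hx).mul hexp.hasDerivWithinAt) (by ring)
  intro x hx
  have h := key x hx
  have h2 : Real.exp (-(c * x)) * Real.exp (c * x) = 1 := by rw [← Real.exp_add]; simp
  have h3 : u 0 * Real.exp (-(c * 0)) = u 0 := by simp
  calc u x = u x * (Real.exp (-(c * x)) * Real.exp (c * x)) := by rw [h2, mul_one]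
    _ = (u x * Real.exp (-(c * x))) * Real.exp (c * x) := by ring
    _ = u 0 * Real.exp (c * x) := by rw [h, h3]

private lemma energyODE {b ρ : ℝ} (hρ : 0 < ρ) {h h₁ : ℝ → ℝ}
    (hd : ∀ x ∈ Icc 0 b, HasDerivWithinAt h (h₁ x) (Icc 0 b) x)
    (hd₁ : ∀ x ∈ Icc 0 b, HasDerivWithinAt h₁ (-(ρ^2) * h x) (Icc 0 b) x)
    (h0 : h 0 = 0) (h10 : h₁ 0 = 0) :
    ∀ x ∈ Icc 0 b, h x = 0 ∧ h₁ x = 0 := by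
  have key : ∀ x ∈ Icc 0 b,
      h₁ x * h₁ x + ρ^2 * (h x * h x) = h₁ 0 * h₁ 0 + ρ^2 * (h 0 * h 0) := by
    apply constIcc
    intro x hx
    exact hdw_of_eq (((hd₁ x hx).mul (hd₁ x hx)).add
      (((hd x hx).mul (hd x hx)).const_mul (ρ^2))) (by ring)
  intro x hx
  have hk := key x hx
  rw [h0, h10] at hk
  have hρ2 : 0 < ρ^2 := by positivity
  have hh : h x * h x = 0 := by
    have h2 : h x * h x ≤ 0 := by nlinarith [mul_self_nonneg (h₁ x)]
    exact le_antisymm h2 (mul_self_nonneg _)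
  have hh1 : h₁ x * h₁ x = 0 := by
    have h2 : h₁ x * h₁ x ≤ 0 := by nlinarith [mul_self_nonneg (h x)]
    exact le_antisymm h2 (mul_self_nonneg _)
  exact ⟨mul_self_eq_zero.1 hh, mul_self_eq_zero.1 hh1⟩

private lemma oscillODE {b ρ : ℝ} (hρ : 0 < ρ) {f f₁ : ℝ → ℝ}
    (hd : ∀ x ∈ Icc 0 b, HasDerivWithinAt f (f₁ x) (Icc 0 b) x)
    (hd₁ : ∀ x ∈ Icc 0 b, HasDerivWithinAt f₁ (-(ρ^2) * f x) (Icc 0 b) x) :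
    ∀ x ∈ Icc 0 b,
      f x = f 0 * Real.cos (ρ*x) + (f₁ 0 / ρ) * Real.sin (ρ*x) ∧
      f₁ x = -(f 0 * ρ) * Real.sin (ρ*x) + f₁ 0 * Real.cos (ρ*x) := by
  have hρint : ∀ x : ℝ, HasDerivAt (fun y : ℝ => ρ * y) ρ x := fun x => by
    simpa using (hasDerivAt_id x).const_mul ρ
  have hcos : ∀ x : ℝ, HasDerivAt (fun y => Real.cos (ρ*y)) (-Real.sin (ρ*x) * ρ) x :=
    fun x => (Real.hasDerivAt_cos (ρ*x)).comp x (hρint x)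
  have hsin : ∀ x : ℝ, HasDerivAt (fun y => Real.sin (ρ*y)) (Real.cos (ρ*x) * ρ) x :=
    fun x => (Real.hasDerivAt_sin (ρ*x)).comp x (hρint x)
  have hF : ∀ x : ℝ, HasDerivAt (fun y => f 0 * Real.cos (ρ*y) + (f₁ 0 / ρ) * Real.sin (ρ*y))
      (-(f 0 * ρ) * Real.sin (ρ*x) + f₁ 0 * Real.cos (ρ*x)) x := by
    intro x
    have h := ((hcos x).const_mul (f 0)).add ((hsin x).const_mul (f₁ 0 / ρ))
    have he : -(f 0 * ρ) * Real.sin (ρ*x) + f₁ 0 * Real.cos (ρ*x)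
        = f 0 * (-Real.sin (ρ*x) * ρ) + (f₁ 0 / ρ) * (Real.cos (ρ*x) * ρ) := by
      field_simp
    exact he ▸ h
  have hF₁ : ∀ x : ℝ, HasDerivAt (fun y => -(f 0 * ρ) * Real.sin (ρ*y) + f₁ 0 * Real.cos (ρ*y))
      (-(ρ^2) * (f 0 * Real.cos (ρ*x) + (f₁ 0 / ρ) * Real.sin (ρ*x))) x := by
    intro x
    have h := ((hsin x).const_mul (-(f 0 * ρ))).add ((hcos x).const_mul (f₁ 0))
    have he : -(ρ^2) * (f 0 * Real.cos (ρ*x) + (f₁ 0 / ρ) * Real.sin (ρ*x))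
        = -(f 0 * ρ) * (Real.cos (ρ*x) * ρ) + f₁ 0 * (-Real.sin (ρ*x) * ρ) := by
      field_simp
      ring
    exact he ▸ h
  have key := energyODE hρ
    (h := fun x => f x - (f 0 * Real.cos (ρ*x) + (f₁ 0 / ρ) * Real.sin (ρ*x)))
    (h₁ := fun x => f₁ x - (-(f 0 * ρ) * Real.sin (ρ*x) + f₁ 0 * Real.cos (ρ*x)))
    (fun x hx => (hd x hx).sub (hF x).hasDerivWithinAt)
    (fun x hx => hdw_of_eq ((hd₁ x hx).sub (hF₁ x).hasDerivWithinAt) (by ring))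
    (by simp) (by simp)
  intro x hx
  have k1 : f x - (f 0 * Real.cos (ρ*x) + (f₁ 0 / ρ) * Real.sin (ρ*x)) = 0 := (key x hx).1
  have k2 : f₁ x - (-(f 0 * ρ) * Real.sin (ρ*x) + f₁ 0 * Real.cos (ρ*x)) = 0 := (key x hx).2
  constructor
  · linarith [k1]
  · linarith [k2]

private lemma hyperODE {b ρ : ℝ} (hρ : 0 < ρ) {f f₁ : ℝ → ℝ}
    (hd : ∀ x ∈ Icc 0 b, HasDerivWithinAt f (f₁ x) (Icc 0 b) x)
    (hd₁ : ∀ x ∈ Icc 0 b, HasDerivWithinAt f₁ (ρ^2 * f x) (Icc 0 b) x) :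
    ∀ x ∈ Icc 0 b,
      f x = ((f₁ 0 + ρ * f 0) * Real.exp (ρ*x) - (f₁ 0 - ρ * f 0) * Real.exp (-ρ*x)) / (2*ρ) ∧
      f₁ x = ((f₁ 0 + ρ * f 0) * Real.exp (ρ*x) + (f₁ 0 - ρ * f 0) * Real.exp (-ρ*x)) / 2 := by
  have hp := expODE (c := ρ) (u := fun x => f₁ x + ρ * f x) (fun x hx =>
    hdw_of_eq ((hd₁ x hx).add ((hd x hx).const_mul ρ)) (by ring))
  have hu := expODE (c := -ρ) (u := fun x => f₁ x - ρ * f x) (fun x hx =>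
    hdw_of_eq ((hd₁ x hx).sub ((hd x hx).const_mul ρ)) (by ring))
  intro x hx
  have hpx : f₁ x + ρ * f x = (f₁ 0 + ρ * f 0) * Real.exp (ρ*x) := hp x hx
  have hux : f₁ x - ρ * f x = (f₁ 0 - ρ * f 0) * Real.exp (-ρ*x) := hu x hx
  constructor
  · rw [eq_div_iff (by positivity : (2*ρ) ≠ 0)]
    linear_combination hpx - hux
  · rw [eq_div_iff (two_ne_zero)]
    linear_combination hpx + hux

private lemma sin_ne_zero_of_res {T m ρ : ℝ} (hT : 0 < T)
    (hres : ∀ k : ℕ, |m| ≠ (k * Real.pi / T) ^ 2) (hρ : 0 < ρ) (hρ2 : ρ^2 = |m|) :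
    Real.sin (ρ * T) ≠ 0 := by
  intro hsin
  obtain ⟨n, hn⟩ := Real.sin_eq_zero_iff.1 hsin
  have hπ := Real.pi_pos
  have hρT : 0 < ρ * T := mul_pos hρ hT
  have hn0 : 0 ≤ n := by
    by_contra hle
    push_neg at hle
    have h1 : (n:ℝ) < 0 := by exact_mod_cast hle
    have h2 := mul_neg_of_neg_of_pos h1 hπ
    rw [hn] at h2
    linarith
  have hcast : ((n.toNat : ℕ) : ℝ) = (n:ℝ) := by exact_mod_cast Int.toNat_of_nonneg hn0
  exact hres n.toNat (by
    rw [← hρ2, hcast, hn, mul_div_assoc, div_self hT.ne', mul_one])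

private lemma zero_on_I {T m : ℝ} (hT : 0 < T) (hm : m ≠ 0)
    (hres : ∀ k : ℕ, |m| ≠ (k * Real.pi / T) ^ 2)
    {f f₁ g g₁ : ℝ → ℝ}
    (hdf : ∀ x ∈ Icc 0 T, HasDerivWithinAt f (f₁ x) (Icc 0 T) x)
    (hdf₁ : ∀ x ∈ Icc 0 T, HasDerivWithinAt f₁ (-m * f x) (Icc 0 T) x)
    (hdg : ∀ x ∈ Icc 0 T, HasDerivWithinAt g (g₁ x) (Icc 0 T) x)
    (hdg₁ : ∀ x ∈ Icc 0 T, HasDerivWithinAt g₁ (m * g x) (Icc 0 T) x)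
    (hf₁0 : f₁ 0 = 0) (hf₁T : f₁ T = 0) (hg0 : g 0 = 0) (hgT : g T = 0) :
    ∀ x ∈ Icc 0 T, f x = 0 ∧ g x = 0 := by
  have hTmem : T ∈ Icc (0:ℝ) T := ⟨hT.le, le_rfl⟩
  rcases hm.lt_or_gt with hneg | hpos
  · -- m < 0 : f hyperbolic, g oscillatory
    set ρ := Real.sqrt (-m) with hρdef
    have hρ : 0 < ρ := Real.sqrt_pos.2 (by linarith)
    have hρ2 : ρ^2 = -m := Real.sq_sqrt (by linarith)
    have hexp : Real.exp (-ρ*T) < Real.exp (ρ*T) := Real.exp_lt_exp.2 (by nlinarith)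
    -- f
    have hdf₁' : ∀ x ∈ Icc 0 T, HasDerivWithinAt f₁ (ρ^2 * f x) (Icc 0 T) x := by
      intro x hx
      exact hdw_of_eq (hdf₁ x hx) (by rw [hρ2])
    have hf := hyperODE hρ hdf hdf₁'
    have hfT := (hf T hTmem).2
    rw [hf₁T, hf₁0] at hfT
    have hkey : ρ * f 0 * (Real.exp (ρ*T) - Real.exp (-ρ*T)) = 0 := by
      linear_combination -2 * hfT
    have hf0 : f 0 = 0 := by
      rcases mul_eq_zero.1 hkey with h | h
      · rcases mul_eq_zero.1 h with h' | h'
        · exact absurd h' hρ.ne'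
        · exact h'
      · linarith [sub_pos.2 hexp]
    have hfzero : ∀ x ∈ Icc 0 T, f x = 0 := by
      intro x hx
      rw [(hf x hx).1, hf₁0, hf0]
      ring
    -- g
    have hdg₁' : ∀ x ∈ Icc 0 T, HasDerivWithinAt g₁ (-(ρ^2) * g x) (Icc 0 T) x := by
      intro x hx
      exact hdw_of_eq (hdg₁ x hx) (by rw [hρ2]; ring)
    have hg := oscillODE hρ hdg hdg₁'
    have hsin : Real.sin (ρ*T) ≠ 0 :=
      sin_ne_zero_of_res hT hres hρ (by rw [hρ2, abs_of_neg hneg])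
    have hgT' := (hg T hTmem).1
    rw [hgT, hg0] at hgT'
    have hg₁0 : g₁ 0 / ρ = 0 := by
      have h1 : g₁ 0 / ρ * Real.sin (ρ*T) = 0 := by linear_combination -hgT'
      rcases mul_eq_zero.1 h1 with h | h
      · exact h
      · exact absurd h hsin
    have hgzero : ∀ x ∈ Icc 0 T, g x = 0 := by
      intro x hx
      rw [(hg x hx).1, hg0, hg₁0]
      ring
    exact fun x hx => ⟨hfzero x hx, hgzero x hx⟩
  · -- 0 < m : f oscillatory, g hyperbolic
    set ρ := Real.sqrt m with hρdef
    have hρ : 0 < ρ := Real.sqrt_pos.2 hpos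
    have hρ2 : ρ^2 = m := Real.sq_sqrt hpos.le
    have hexp : Real.exp (-ρ*T) < Real.exp (ρ*T) := Real.exp_lt_exp.2 (by nlinarith)
    -- f
    have hdf₁' : ∀ x ∈ Icc 0 T, HasDerivWithinAt f₁ (-(ρ^2) * f x) (Icc 0 T) x := by
      intro x hx
      exact hdw_of_eq (hdf₁ x hx) (by rw [hρ2])
    have hf := oscillODE hρ hdf hdf₁'
    have hsin : Real.sin (ρ*T) ≠ 0 :=
      sin_ne_zero_of_res hT hres hρ (by rw [hρ2, abs_of_pos hpos])
    have hfT := (hf T hTmem).2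
    rw [hf₁T, hf₁0] at hfT
    have hkey : f 0 * ρ * Real.sin (ρ*T) = 0 := by linear_combination hfT
    have hf0 : f 0 = 0 := by
      rcases mul_eq_zero.1 hkey with h | h
      · rcases mul_eq_zero.1 h with h' | h'
        · exact h'
        · exact absurd h' hρ.ne'
      · exact absurd h hsin
    have hfzero : ∀ x ∈ Icc 0 T, f x = 0 := by
      intro x hx
      rw [(hf x hx).1, hf₁0, hf0]
      ring
    -- g
    have hdg₁' : ∀ x ∈ Icc 0 T, HasDerivWithinAt g₁ (ρ^2 * g x) (Icc 0 T) x := by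
      intro x hx
      exact hdw_of_eq (hdg₁ x hx) (by rw [hρ2])
    have hg := hyperODE hρ hdg hdg₁'
    have hgT' := (hg T hTmem).1
    rw [hgT, hg0] at hgT'
    have hnum : (g₁ 0 + ρ * g 0) * Real.exp (ρ*T) - (g₁ 0 - ρ * g 0) * Real.exp (-ρ*T) = 0 := by
      rw [hg0]
      rcases div_eq_zero_iff.1 hgT'.symm with h | h
      · exact h
      · linarith
    have hkey2 : g₁ 0 * (Real.exp (ρ*T) - Real.exp (-ρ*T)) = 0 := by
      rw [hg0] at hnum
      linear_combination hnum
    have hg₁0 : g₁ 0 = 0 := by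
      rcases mul_eq_zero.1 hkey2 with h | h
      · exact h
      · linarith [sub_pos.2 hexp]
    have hgzero : ∀ x ∈ Icc 0 T, g x = 0 := by
      intro x hx
      rw [(hg x hx).1, hg0, hg₁0]
      ring
    exact fun x hx => ⟨hfzero x hx, hgzero x hx⟩

theorem stmt2 (T m : ℝ) (hT : 0 < T) (hm : m ≠ 0)
    (hres : ∀ k : ℕ, |m| ≠ (k * Real.pi / T) ^ 2) :
    IsSolS2 T m (fun _ => 1 / m) ∧
    ∀ v : ℝ → ℝ, IsSolS2 T m v → ∀ t ∈ Set.Icc (-T) T, v t = 1 / m := by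
  have hTT : -T < T := by linarith
  have hus : UniqueDiffOn ℝ (Icc (-T) T) := uniqueDiffOn_Icc hTT
  have hTmem : T ∈ Icc (-T) T := ⟨hTT.le, le_rfl⟩
  have hTmem' : -T ∈ Icc (-T) T := ⟨le_rfl, hTT.le⟩
  constructor
  · -- existence
    have hiterconst : ∀ t ∈ Icc (-T) T,
        iteratedDerivWithin 2 (fun _ : ℝ => 1/m) (Icc (-T) T) t = 0 := by
      intro t ht
      have h1 : ∀ x ∈ Icc (-T) T,
          iteratedDerivWithin 1 (fun _ : ℝ => 1/m) (Icc (-T) T) x = (fun _ : ℝ => (0:ℝ)) x := by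
        intro x hx
        rw [iteratedDerivWithin_one]
        simp
      rw [show (2:ℕ) = 1 + 1 from rfl, iteratedDerivWithin_succ,
        derivWithin_congr (fun x hx => h1 x hx) (h1 t ht)]
      simp
    refine ⟨contDiffOn_const, fun t ht => ?_, rfl, ?_⟩
    · rw [hiterconst t ht]
      field_simp
      norm_num
    · simp
  · -- uniqueness
    rintro v ⟨hv, heq, hbcv, hbcd⟩
    set v₁ := derivWithin v (Icc (-T) T) with hv₁def
    have hsub : Icc (0:ℝ) T ⊆ Icc (-T) T := Icc_subset_Icc (by linarith) le_rfl
    have hmem : ∀ t ∈ Icc (-T) T, -t ∈ Icc (-T) T := fun t ht =>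
      ⟨by linarith [ht.2], by linarith [ht.1]⟩
    have hdiffv : DifferentiableOn ℝ v (Icc (-T) T) := hv.differentiableOn two_ne_zero
    have hv2 : ContDiffOn ℝ ((1 : WithTop ℕ∞) + 1) v (Icc (-T) T) := by
      have h : ((1 : WithTop ℕ∞) + 1) = 2 := by norm_num
      rw [h]; exact hv
    have hsp := (contDiffOn_succ_iff_derivWithin hus).1 hv2
    have hdiffv1 : DifferentiableOn ℝ v₁ (Icc (-T) T) := hsp.2.2.differentiableOn one_ne_zero
    have hD1 : ∀ t ∈ Icc (-T) T, HasDerivWithinAt v (v₁ t) (Icc (-T) T) t :=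
      fun t ht => (hdiffv t ht).hasDerivWithinAt
    have hone : ∀ x ∈ Icc (-T) T, iteratedDerivWithin 1 v (Icc (-T) T) x = v₁ x :=
      fun x hx => by rw [iteratedDerivWithin_one]
    have hiter2 : ∀ t ∈ Icc (-T) T,
        iteratedDerivWithin 2 v (Icc (-T) T) t = derivWithin v₁ (Icc (-T) T) t := by
      intro t ht
      rw [show (2:ℕ) = 1 + 1 from rfl, iteratedDerivWithin_succ]
      exact derivWithin_congr (fun x hx => hone x hx) (hone t ht)
    have hD2 : ∀ t ∈ Icc (-T) T, HasDerivWithinAt v₁ (1 - m * v (-t)) (Icc (-T) T) t := by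
      intro t ht
      have h := (hdiffv1 t ht).hasDerivWithinAt
      have he : derivWithin v₁ (Icc (-T) T) t = 1 - m * v (-t) := by
        rw [← hiter2 t ht]
        linarith [heq t ht]
      rwa [he] at h
    have hDn1 : ∀ t ∈ Icc (-T) T,
        HasDerivWithinAt (fun x => v (-x)) (-v₁ (-t)) (Icc (-T) T) t := by
      intro t ht
      have h := (hD1 (-t) (hmem t ht)).comp t (hasDerivAt_neg' t).hasDerivWithinAt
        (fun x hx => hmem x hx)
      exact hdw_of_eq h (by ring)
    have hDn2 : ∀ t ∈ Icc (-T) T,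
        HasDerivWithinAt (fun x => v₁ (-x)) (-(1 - m * v t)) (Icc (-T) T) t := by
      intro t ht
      have h := (hD2 (-t) (hmem t ht)).comp t (hasDerivAt_neg' t).hasDerivWithinAt
        (fun x hx => hmem x hx)
      rw [neg_neg] at h
      exact hdw_of_eq h (by ring)
    have hzero := zero_on_I hT hm hres
      (f := fun x => (v x + v (-x) - 2/m)/2) (f₁ := fun x => (v₁ x - v₁ (-x))/2)
      (g := fun x => (v x - v (-x))/2) (g₁ := fun x => (v₁ x + v₁ (-x))/2)
      (fun x hx => hdw_of_eq
        (((((hD1 x (hsub hx)).add (hDn1 x (hsub hx))).sub_const (2/m)).div_const 2).mono hsub)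
        (by ring))
      (fun x hx => hdw_of_eq
        ((((hD2 x (hsub hx)).sub (hDn2 x (hsub hx))).div_const 2).mono hsub)
        (by field_simp; ring))
      (fun x hx => hdw_of_eq
        ((((hD1 x (hsub hx)).sub (hDn1 x (hsub hx))).div_const 2).mono hsub)
        (by ring))
      (fun x hx => hdw_of_eq
        ((((hD2 x (hsub hx)).add (hDn2 x (hsub hx))).div_const 2).mono hsub)
        (by ring))
      (by norm_num)
      (by simp [hbcd])
      (by norm_num)
      (by simp [hbcv])
    have htwo : (2:ℝ)/m = 2 * (1/m) := by ring
    intro t ht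
    rcases le_or_gt 0 t with h0 | h0
    · have ht0 : t ∈ Icc (0:ℝ) T := ⟨h0, ht.2⟩
      have h1 : (v t + v (-t) - 2/m)/2 = 0 := (hzero t ht0).1
      have h2 : (v t - v (-t))/2 = 0 := (hzero t ht0).2
      linarith
    · have ht0 : -t ∈ Icc (0:ℝ) T := ⟨by linarith, by linarith [ht.1]⟩
      have h1 : (v (-t) + v (-(-t)) - 2/m)/2 = 0 := (hzero (-t) ht0).1
      have h2 : (v (-t) - v (-(-t)))/2 = 0 := (hzero (-t) ht0).2
      rw [neg_neg] at h1 h2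
      linarith
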